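/- Let y ∈ (0,1) and 0 < n̲ < n̄. If y > (s + m − 1)/(N + m − 1), then the Beta-Binomial distribution with prior strength n̄ first-order stochastically dominates the one with prior strength n̲ (for every l, Σ_{j=0}^{l} p(j | y, n̄, m, s, N) ≤ Σ_{j=0}^{l} p(j | y, n̲, m, s, N)); and if y < s/(N + m − 1), then the Beta-Binomial distribution with prior strength n̲ first-order stochastically dominates the one with prior strength n̄. -/

import Mathlib

/-- The Euler Beta function `B(a,b) = Γ(a)Γ(b)/Γ(a+b)`. -/
noncomputable def eulerBeta (a b : ℝ) : ℝ := Real.Gamma a * Real.Gamma b / Real.Gamma (a + b)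

/-- The Beta-Binomial probability mass function
`p(l ∣ y, n, m, s, N) = C(m,l) · B(l + ny + s, m − l + n(1−y) + N − s) / B(ny + s, n(1−y) + N − s)`. -/
noncomputable def bbPmf (y n : ℝ) (m s N : ℕ) (l : ℕ) : ℝ :=
  (m.choose l : ℝ) *
    eulerBeta ((l : ℝ) + n * y + s) ((m : ℝ) - l + n * (1 - y) + N - s) /
    eulerBeta (n * y + s) (n * (1 - y) + N - s)

/-- The rising factorial `x (x+1) ⋯ (x+k-1)`. -/
noncomputable def rf (x : ℝ) (k : ℕ) : ℝ := ∏ i ∈ Finset.range k, (x + i)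

lemma rf_succ (x : ℝ) (k : ℕ) : rf x (k+1) = rf x k * (x + k) := Finset.prod_range_succ _ _

lemma rf_pos {x : ℝ} (hx : 0 < x) (k : ℕ) : 0 < rf x k :=
  Finset.prod_pos fun i _ => by positivity

lemma Gamma_rf {x : ℝ} (hx : 0 < x) (k : ℕ) :
    Real.Gamma (x + k) = Real.Gamma x * rf x k := by
  induction k with
  | zero => simp [rf]
  | succ k ih =>
    have hk : x + (k : ℝ) ≠ 0 := by positivity
    have h : x + ((k+1 : ℕ) : ℝ) = (x + k) + 1 := by push_cast; ring
    rw [h, Real.Gamma_add_one hk, ih, rf_succ]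
    ring

lemma eulerBeta_ratio {a b : ℝ} (ha : 0 < a) (hb : 0 < b) {l m : ℕ} (hl : l ≤ m) :
    eulerBeta (a + l) (b + ((m - l : ℕ) : ℝ)) / eulerBeta a b
      = rf a l * rf b (m - l) / rf (a + b) m := by
  have hab : 0 < a + b := by linarith
  have hsum : (a + l) + (b + ((m - l : ℕ) : ℝ)) = (a + b) + m := by
    rw [Nat.cast_sub hl]; ring
  unfold eulerBeta
  rw [hsum, Gamma_rf ha, Gamma_rf hb, Gamma_rf hab]
  have g1 := (Real.Gamma_pos_of_pos ha).ne'
  have g2 := (Real.Gamma_pos_of_pos hb).ne'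
  have g3 := (Real.Gamma_pos_of_pos hab).ne'
  have g4 := (rf_pos hab m).ne'
  field_simp

lemma bbPmf_eq {y n : ℝ} {m s N : ℕ} {l : ℕ} (hl : l ≤ m)
    (ha : 0 < n * y + (s : ℝ)) (hb : 0 < n * (1 - y) + (N : ℝ) - s) :
    bbPmf y n m s N l = (m.choose l : ℝ) *
      (rf (n * y + s) l * rf (n * (1 - y) + (N : ℝ) - s) (m - l)
        / rf ((n * y + s) + (n * (1 - y) + (N : ℝ) - s)) m) := by
  unfold bbPmf
  rw [mul_div_assoc]
  congr 1
  have h1 : (l : ℝ) + n * y + s = (n * y + s) + l := by ring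
  have h2 : (m : ℝ) - l + n * (1 - y) + N - s
      = (n * (1 - y) + (N : ℝ) - s) + ((m - l : ℕ) : ℝ) := by
    rw [Nat.cast_sub hl]; ring
  rw [h1, h2, eulerBeta_ratio ha hb hl]

lemma vandermonde (a b : ℝ) (m : ℕ) :
    ∑ l ∈ Finset.range (m+1), (m.choose l : ℝ) * (rf a l * rf b (m - l)) = rf (a+b) m := by
  induction m with
  | zero => simp [rf]
  | succ m ih =>
    rw [Finset.sum_range_succ']
    have hsplit : ∑ l ∈ Finset.range (m+1),
        ((m+1).choose (l+1) : ℝ) * (rf a (l+1) * rf b (m + 1 - (l+1)))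
        = (∑ l ∈ Finset.range (m+1), (m.choose l : ℝ) * (rf a (l+1) * rf b (m - l)))
          + ∑ l ∈ Finset.range (m+1), (m.choose (l+1) : ℝ) * (rf a (l+1) * rf b (m - l)) := by
      rw [← Finset.sum_add_distrib]
      apply Finset.sum_congr rfl
      intro l _
      have : ((m+1).choose (l+1) : ℝ) = (m.choose l : ℝ) + (m.choose (l+1) : ℝ) := by
        rw [Nat.choose_succ_succ]; push_cast; ring
      rw [Nat.succ_sub_succ, this]; ring
    rw [hsplit]
    have hg : (∑ l ∈ Finset.range (m+1), (m.choose (l+1) : ℝ) * (rf a (l+1) * rf b (m - l)))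
        + ((m+1).choose 0 : ℝ) * (rf a 0 * rf b (m + 1 - 0))
        = ∑ l ∈ Finset.range (m+1), (m.choose l : ℝ) * (rf a l * rf b (m + 1 - l)) := by
      have h1 : ∑ l ∈ Finset.range (m+1+1), (m.choose l : ℝ) * (rf a l * rf b (m + 1 - l))
          = (∑ l ∈ Finset.range (m+1), (m.choose (l+1) : ℝ) * (rf a (l+1) * rf b (m + 1 - (l+1))))
            + (m.choose 0 : ℝ) * (rf a 0 * rf b (m + 1 - 0)) := Finset.sum_range_succ' _ _
      have h2 : ∑ l ∈ Finset.range (m+1+1), (m.choose l : ℝ) * (rf a l * rf b (m + 1 - l))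
          = (∑ l ∈ Finset.range (m+1), (m.choose l : ℝ) * (rf a l * rf b (m + 1 - l)))
            + (m.choose (m+1) : ℝ) * (rf a (m+1) * rf b (m + 1 - (m+1))) := Finset.sum_range_succ _ _
      rw [h1] at h2
      simp only [Nat.choose_succ_succ, Nat.succ_sub_succ, Nat.choose_self, Nat.choose_zero_right,
        Nat.choose_succ_self, Nat.cast_zero, Nat.cast_one] at h2 ⊢
      linarith [h2]
    rw [add_assoc, hg]
    have hcomb : (∑ l ∈ Finset.range (m+1), (m.choose l : ℝ) * (rf a (l+1) * rf b (m - l)))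
        + ∑ l ∈ Finset.range (m+1), (m.choose l : ℝ) * (rf a l * rf b (m + 1 - l))
        = (a + b + m) * ∑ l ∈ Finset.range (m+1), (m.choose l : ℝ) * (rf a l * rf b (m - l)) := by
      rw [← Finset.sum_add_distrib, Finset.mul_sum]
      apply Finset.sum_congr rfl
      intro l hl
      have hlm : l ≤ m := Nat.lt_succ_iff.mp (Finset.mem_range.mp hl)
      have e1 : m + 1 - l = (m - l) + 1 := by omega
      have e2 : ((m - l : ℕ) : ℝ) = (m : ℝ) - l := by rw [Nat.cast_sub hlm]
      rw [e1, rf_succ, rf_succ, e2]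
      ring
    rw [hcomb, ih, rf_succ]
    ring

lemma sum_bbPmf {y n : ℝ} {m s N : ℕ}
    (ha : 0 < n * y + (s : ℝ)) (hb : 0 < n * (1 - y) + (N : ℝ) - s) :
    ∑ l ∈ Finset.range (m+1), bbPmf y n m s N l = 1 := by
  have hab : 0 < (n * y + (s:ℝ)) + (n * (1 - y) + (N : ℝ) - s) := by linarith
  rw [Finset.sum_congr rfl fun l hl =>
    bbPmf_eq (Nat.lt_succ_iff.mp (Finset.mem_range.mp hl)) ha hb]
  have : ∀ l ∈ Finset.range (m+1), (m.choose l : ℝ) *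
      (rf (n * y + s) l * rf (n * (1 - y) + (N : ℝ) - s) (m - l)
        / rf ((n * y + s) + (n * (1 - y) + (N : ℝ) - s)) m)
      = (m.choose l : ℝ) * (rf (n * y + s) l * rf (n * (1 - y) + (N : ℝ) - s) (m - l))
        / rf ((n * y + s) + (n * (1 - y) + (N : ℝ) - s)) m :=
    fun l _ => by ring
  rw [Finset.sum_congr rfl this, ← Finset.sum_div, vandermonde]
  exact div_self (rf_pos hab m).ne'

lemma chain_cross (m : ℕ) (u v : ℕ → ℝ) (hv : ∀ l, l ≤ m → 0 < v l)
    (hstep : ∀ l, l + 1 ≤ m → u l * v (l+1) ≤ v l * u (l+1)) :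
    ∀ j k, j ≤ k → k ≤ m → u j * v k ≤ v j * u k := by
  intro j k hjk hkm
  induction k, hjk using Nat.le_induction with
  | base => exact le_of_eq (mul_comm _ _)
  | succ k hk ih =>
    have hkm' : k ≤ m := by omega
    have h1 := ih hkm'
    have h2 := hstep k hkm
    have hvj := hv j (by omega)
    have hvk := hv k hkm'
    have hvk1 := hv (k+1) hkm
    have hfin : u j * v (k+1) * v k ≤ v j * u (k+1) * v k := by nlinarith
    exact le_of_mul_le_mul_right hfin hvk

lemma mlr_fosd (m : ℕ) (P Q : ℕ → ℝ)
    (hPsum : ∑ j ∈ Finset.range (m+1), P j = 1)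
    (hQsum : ∑ j ∈ Finset.range (m+1), Q j = 1)
    (cross : ∀ j k, j ≤ k → k ≤ m → Q j * P k ≤ P j * Q k) :
    ∀ l, l ≤ m → ∑ j ∈ Finset.range (l+1), Q j ≤ ∑ j ∈ Finset.range (l+1), P j := by
  intro l hl
  have hsplit : ∀ f : ℕ → ℝ, ∑ k ∈ Finset.range (m+1), f k
      = ∑ k ∈ Finset.range (l+1), f k + ∑ k ∈ Finset.Ico (l+1) (m+1), f k :=
    fun f => (Finset.sum_range_add_sum_Ico f (by omega)).symm
  have e1 : ∑ j ∈ Finset.range (l+1), Q j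
      = (∑ j ∈ Finset.range (l+1), ∑ k ∈ Finset.range (l+1), Q j * P k)
        + ∑ j ∈ Finset.range (l+1), ∑ k ∈ Finset.Ico (l+1) (m+1), Q j * P k := by
    rw [← Finset.sum_add_distrib]
    apply Finset.sum_congr rfl
    intro j _
    rw [← hsplit, ← Finset.mul_sum, hPsum, mul_one]
  have e2 : ∑ j ∈ Finset.range (l+1), P j
      = (∑ j ∈ Finset.range (l+1), ∑ k ∈ Finset.range (l+1), P j * Q k)
        + ∑ j ∈ Finset.range (l+1), ∑ k ∈ Finset.Ico (l+1) (m+1), P j * Q k := by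
    rw [← Finset.sum_add_distrib]
    apply Finset.sum_congr rfl
    intro j _
    rw [← hsplit, ← Finset.mul_sum, hQsum, mul_one]
  rw [e1, e2]
  have hsym : (∑ j ∈ Finset.range (l+1), ∑ k ∈ Finset.range (l+1), Q j * P k)
      = ∑ j ∈ Finset.range (l+1), ∑ k ∈ Finset.range (l+1), P j * Q k := by
    rw [Finset.sum_comm]
    exact Finset.sum_congr rfl fun j _ => Finset.sum_congr rfl fun k _ => mul_comm _ _
  rw [hsym]
  apply add_le_add_right
  apply Finset.sum_le_sum
  intro j hj
  apply Finset.sum_le_sum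
  intro k hk
  simp only [Finset.mem_range, Finset.mem_Ico] at hj hk
  exact cross j k (by omega) (by omega)

/-- Main auxiliary lemma: a termwise product condition on the parameters implies the
CDF comparison between the two Beta-Binomial distributions. -/
lemma bb_aux (y n1 n2 : ℝ) (m s N : ℕ)
    (hy0 : 0 < y) (hy1 : y < 1) (h1 : 0 < n1) (h2 : 0 < n2) (hsN : s ≤ N)
    (hkey : ∀ j : ℕ, j + 1 ≤ m →
      (n1 * y + (s:ℝ) + j) * (n2 * (1 - y) + (N:ℝ) - s + ((m:ℝ) - 1 - j))
        ≤ (n2 * y + (s:ℝ) + j) * (n1 * (1 - y) + (N:ℝ) - s + ((m:ℝ) - 1 - j))) :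
    ∀ l, l ≤ m → ∑ j ∈ Finset.range (l+1), bbPmf y n2 m s N j
      ≤ ∑ j ∈ Finset.range (l+1), bbPmf y n1 m s N j := by
  have hNs : (s : ℝ) ≤ N := Nat.cast_le.mpr hsN
  have ha1 : 0 < n1 * y + (s : ℝ) := by
    have := Nat.cast_nonneg (α := ℝ) s
    nlinarith
  have hb1 : 0 < n1 * (1 - y) + (N : ℝ) - s := by nlinarith
  have ha2 : 0 < n2 * y + (s : ℝ) := by
    have := Nat.cast_nonneg (α := ℝ) s
    nlinarith
  have hb2 : 0 < n2 * (1 - y) + (N : ℝ) - s := by nlinarith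
  apply mlr_fosd m _ _ (sum_bbPmf ha1 hb1) (sum_bbPmf ha2 hb2)
  -- cross condition
  intro j k hjk hkm
  have hjm : j ≤ m := hjk.trans hkm
  rw [bbPmf_eq hjm ha1 hb1, bbPmf_eq hkm ha1 hb1, bbPmf_eq hjm ha2 hb2, bbPmf_eq hkm ha2 hb2]
  have hD1 : 0 < rf ((n1 * y + (s:ℝ)) + (n1 * (1 - y) + (N:ℝ) - s)) m := rf_pos (by linarith) m
  have hD2 : 0 < rf ((n2 * y + (s:ℝ)) + (n2 * (1 - y) + (N:ℝ) - s)) m := rf_pos (by linarith) m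
  have hchain : rf (n2 * y + (s:ℝ)) j * rf (n2 * (1 - y) + (N:ℝ) - s) (m - j)
        * (rf (n1 * y + (s:ℝ)) k * rf (n1 * (1 - y) + (N:ℝ) - s) (m - k))
      ≤ rf (n1 * y + (s:ℝ)) j * rf (n1 * (1 - y) + (N:ℝ) - s) (m - j)
        * (rf (n2 * y + (s:ℝ)) k * rf (n2 * (1 - y) + (N:ℝ) - s) (m - k)) := by
    apply chain_cross m
      (fun l => rf (n2 * y + (s:ℝ)) l * rf (n2 * (1 - y) + (N:ℝ) - s) (m - l))
      (fun l => rf (n1 * y + (s:ℝ)) l * rf (n1 * (1 - y) + (N:ℝ) - s) (m - l))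
      (fun l _ => mul_pos (rf_pos ha1 l) (rf_pos hb1 (m - l)))
      ?_ j k hjk hkm
    intro l hlm
    beta_reduce
    have hml : m - l = (m - (l+1)) + 1 := by omega
    rw [hml, rf_succ, rf_succ, rf_succ, rf_succ]
    have hc : ((m - (l+1) : ℕ) : ℝ) = (m : ℝ) - 1 - l := by
      rw [Nat.cast_sub hlm]; push_cast; ring
    have hK : 0 < rf (n2 * y + (s:ℝ)) l * rf (n1 * (1 - y) + (N:ℝ) - s) (m - (l+1))
        * (rf (n1 * y + (s:ℝ)) l * rf (n2 * (1 - y) + (N:ℝ) - s) (m - (l+1))) :=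
      mul_pos (mul_pos (rf_pos ha2 l) (rf_pos hb1 _)) (mul_pos (rf_pos ha1 l) (rf_pos hb2 _))
    have h := hkey l hlm
    rw [← hc] at h
    nlinarith [mul_le_mul_of_nonneg_left h hK.le]
  have hCj : (0:ℝ) ≤ (m.choose j : ℝ) := Nat.cast_nonneg _
  have hCk : (0:ℝ) ≤ (m.choose k : ℝ) := Nat.cast_nonneg _
  have hfac : (0:ℝ) ≤ ((m.choose j : ℝ) * (m.choose k))
      * ((rf ((n1 * y + (s:ℝ)) + (n1 * (1 - y) + (N:ℝ) - s)) m)⁻¹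
        * (rf ((n2 * y + (s:ℝ)) + (n2 * (1 - y) + (N:ℝ) - s)) m)⁻¹) :=
    mul_nonneg (mul_nonneg hCj hCk)
      (mul_nonneg (inv_nonneg.mpr hD1.le) (inv_nonneg.mpr hD2.le))
  simp only [div_eq_mul_inv]
  nlinarith [mul_le_mul_of_nonneg_left hchain hfac]

/-- Theorem 2: sufficient conditions on `y` under which the Beta-Binomial distribution with
larger (resp. smaller) prior strength first-order stochastically dominates the other one. -/
theorem bbPmf_stochDom_strength (y nlo nhi : ℝ) (m s N : ℕ)
    (hy0 : 0 < y) (hy1 : y < 1) (hn0 : 0 < nlo) (hn : nlo < nhi)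
    (hm : 1 ≤ m) (hsN : s ≤ N) :
    (y > ((s : ℝ) + m - 1) / ((N : ℝ) + m - 1) →
      ∀ l ≤ m, ∑ j ∈ Finset.range (l + 1), bbPmf y nhi m s N j ≤
        ∑ j ∈ Finset.range (l + 1), bbPmf y nlo m s N j) ∧
    (y < (s : ℝ) / ((N : ℝ) + m - 1) →
      ∀ l ≤ m, ∑ j ∈ Finset.range (l + 1), bbPmf y nlo m s N j ≤
        ∑ j ∈ Finset.range (l + 1), bbPmf y nhi m s N j) := by
  have hm1 : (1:ℝ) ≤ m := by exact_mod_cast hm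
  have hN0 : (0:ℝ) ≤ N := Nat.cast_nonneg _
  have hden : (0:ℝ) ≤ (N:ℝ) + m - 1 := by linarith
  have hNs : (s : ℝ) ≤ N := Nat.cast_le.mpr hsN
  have hs0 : (0:ℝ) ≤ s := Nat.cast_nonneg _
  constructor
  · intro hy l hl
    have key1 : (s:ℝ) + m - 1 ≤ y * ((N:ℝ) + m - 1) := by
      rcases eq_or_lt_of_le hden with h0 | hpos
      · have hNz : (N:ℝ) = 0 := by linarith
        have hmz : (m:ℝ) = 1 := by linarith
        have hsz : (s:ℝ) = 0 := by linarith
        rw [← h0, mul_zero]; linarith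
      · exact le_of_lt ((div_lt_iff₀ hpos).mp hy)
    apply bb_aux y nlo nhi m s N hy0 hy1 hn0 (hn0.trans hn) hsN ?_ l hl
    intro j hj
    have hjm : (j:ℝ) + 1 ≤ m := by exact_mod_cast hj
    have hd : (0:ℝ) ≤ nhi - nlo := by linarith
    nlinarith [mul_nonneg hd (show (0:ℝ) ≤ y * ((N:ℝ) + m - 1) - ((s:ℝ) + m - 1) by linarith),
      mul_nonneg hd (show (0:ℝ) ≤ (m:ℝ) - 1 - j by linarith)]
  · intro hy l hl
    have key2 : y * ((N:ℝ) + m - 1) ≤ s := by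
      rcases eq_or_lt_of_le hden with h0 | hpos
      · exfalso
        have hsz : (s:ℝ) = 0 := by nlinarith
        rw [hsz, zero_div] at hy
        linarith
      · exact le_of_lt ((lt_div_iff₀ hpos).mp hy)
    apply bb_aux y nhi nlo m s N hy0 hy1 (hn0.trans hn) hn0 hsN ?_ l hl
    intro j hj
    have hjm : (j:ℝ) + 1 ≤ m := by exact_mod_cast hj
    have hd : (0:ℝ) ≤ nhi - nlo := by linarith
    nlinarith [mul_nonneg hd (show (0:ℝ) ≤ (s:ℝ) - y * ((N:ℝ) + m - 1) by linarith),
      mul_nonneg hd (show (0:ℝ) ≤ (j:ℝ) by positivity)]
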